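/- Let n be odd and B : F_{2^n} × F_{2^n} → F_{2^n} the F_2-bilinear map B(α,β) = αβ². For each α ≠ 0, the range of the linear map L_α(β) = αβ² - α²β equals {x ∈ F_{2^n} : Tr(α⁻³ x) = 0}, which is a hyperplane (an F_2-subspace of codimension 1) in F_{2^n}. -/

import Mathlib

/-- The field trace of `F = 𝔽_{2^n}` over `𝔽₂`, viewed inside `F`:
`Tr(α) = α + α² + α⁴ + ⋯ + α^{2^{n-1}}`. -/
def fieldTr (n : ℕ) {F : Type*} [Field F] (α : F) : F :=
  ∑ j ∈ Finset.range n, α ^ (2 ^ j)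

/-- Let `n` be odd, `F = 𝔽_{2^n}` and `B(α,β) = αβ²`. For `α ≠ 0`, the range of
`L_α(β) = αβ² - α²β` equals `{x : Tr(α⁻³ x) = 0}`, which is a hyperplane: an
`𝔽₂`-subspace (additive subgroup, since `char F = 2`) of cardinality `2^{n-1}`,
i.e. of codimension 1. -/
theorem range_L_hyperplane (F : Type*) [Field F] [Fintype F] (n : ℕ)
    (hodd : Odd n) (hcard : Fintype.card F = 2 ^ n)
    (α : F) (hα : α ≠ 0) :
    Set.range (fun β : F => α * β ^ 2 - α ^ 2 * β) =
        {x : F | fieldTr n ((α ^ 3)⁻¹ * x) = 0} ∧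
      ∃ S : AddSubgroup F,
        (S : Set F) = Set.range (fun β : F => α * β ^ 2 - α ^ 2 * β) ∧
        Nat.card S = 2 ^ (n - 1) := by
  classical
  have hn : 0 < n := hodd.pos
  -- characteristic 2
  have h2 : (2 : F) = 0 := by
    have h := FiniteField.cast_card_eq_zero F
    rw [hcard] at h
    push_cast at h
    exact pow_eq_zero_iff hn.ne' |>.mp h
  haveI hchar : CharP F 2 := by
    have hd : ringChar F ∣ 2 := ringChar.dvd (by exact_mod_cast h2)
    have : ringChar F = 1 ∨ ringChar F = 2 :=
      (Nat.dvd_prime Nat.prime_two).mp hd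
    rcases this with h1 | h2'
    · exfalso
      have : ((1 : ℕ) : F) = 0 := (ringChar.spec F 1).mpr (h1 ▸ dvd_refl _)
      simp at this
    · exact h2' ▸ ringChar.charP F
  haveI : Fact (Nat.Prime 2) := ⟨Nat.prime_two⟩
  have hq : ∀ x : F, x ^ (2 ^ n) = x := fun x => by
    rw [← hcard]; exact FiniteField.pow_card x
  -- trace of Artin-Schreier elements is zero
  have htr : ∀ γ : F, fieldTr n (γ ^ 2 + γ) = 0 := by
    intro γ
    unfold fieldTr
    have hterm : ∀ j, (γ ^ 2 + γ) ^ (2 ^ j)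
        = γ ^ (2 ^ (j + 1)) + γ ^ (2 ^ j) := by
      intro j
      rw [add_pow_char_pow, ← pow_mul, pow_succ, mul_comm (2 ^ j) 2]
    calc ∑ j ∈ Finset.range n, (γ ^ 2 + γ) ^ (2 ^ j)
        = ∑ j ∈ Finset.range n,
            ((fun j => γ ^ (2 ^ j)) (j + 1) - (fun j => γ ^ (2 ^ j)) j) := by
          refine Finset.sum_congr rfl fun j _ => ?_
          simp only [hterm, CharTwo.sub_eq_add]
      _ = γ ^ (2 ^ n) - γ ^ (2 ^ 0) := Finset.sum_range_sub (fun j => γ ^ (2 ^ j)) n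
      _ = 0 := by rw [hq, pow_zero, pow_one, sub_self]
  -- the polynomial bound: at most 2^(n-1) elements have trace zero
  set T : Finset F := Finset.univ.filter (fun x => fieldTr n x = 0) with hT
  have hTcard : T.card ≤ 2 ^ (n - 1) := by
    set P : Polynomial F := ∑ j ∈ Finset.range n, Polynomial.X ^ (2 ^ j) with hP
    have heval : ∀ x : F, P.eval x = fieldTr n x := by
      intro x
      simp [hP, fieldTr, Polynomial.eval_finset_sum]
    have hcoeff : P.coeff (2 ^ (n - 1)) = 1 := by
      rw [hP, Polynomial.finset_sum_coeff]
      rw [Finset.sum_eq_single (n - 1)]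
      · simp [Polynomial.coeff_X_pow]
      · intro j hj hjne
        rw [Polynomial.coeff_X_pow, if_neg]
        intro he
        exact hjne (Nat.pow_right_injective le_rfl he).symm
      · intro h
        exact absurd (Finset.mem_range.mpr (Nat.sub_lt hn one_pos)) h
    have hPne : P ≠ 0 := fun h0 => by simp [h0] at hcoeff
    have hdeg : P.natDegree ≤ 2 ^ (n - 1) := by
      rw [hP]
      refine Polynomial.natDegree_sum_le_of_forall_le _ _ fun j hj => ?_
      rw [Polynomial.natDegree_X_pow]
      exact Nat.pow_le_pow_right (by norm_num) (Nat.le_sub_one_of_lt (Finset.mem_range.mp hj))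
    have hsub : T ⊆ P.roots.toFinset := by
      intro x hx
      rw [Multiset.mem_toFinset, Polynomial.mem_roots hPne]
      rw [hT, Finset.mem_filter] at hx
      exact (heval x).trans hx.2
    calc T.card ≤ P.roots.toFinset.card := Finset.card_le_card hsub
      _ ≤ Multiset.card P.roots := Multiset.toFinset_card_le _
      _ ≤ P.natDegree := Polynomial.card_roots' P
      _ ≤ 2 ^ (n - 1) := hdeg
  -- the additive map ψ
  set ψ : F →+ F := AddMonoidHom.mk' (fun β : F => α * β ^ 2 - α ^ 2 * β)
    (fun a b => by
      show α * (a + b) ^ 2 - α ^ 2 * (a + b) = _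
      rw [CharTwo.add_sq]; ring) with hψ
  have hkerset : (ψ.ker : Set F) = {0, α} := by
    ext β
    simp only [SetLike.mem_coe, AddMonoidHom.mem_ker, Set.mem_insert_iff,
      Set.mem_singleton_iff]
    show α * β ^ 2 - α ^ 2 * β = 0 ↔ β = 0 ∨ β = α
    have hfac : α * β ^ 2 - α ^ 2 * β = α * β * (β - α) := by ring
    rw [hfac, mul_eq_zero, mul_eq_zero, sub_eq_zero]
    simp [hα]
  have hker : Nat.card ψ.ker = 2 := by
    rw [← SetLike.coe_sort_coe, hkerset, Nat.card_coe_set_eq,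
      Set.ncard_pair (Ne.symm hα)]
  have hrange : Nat.card ψ.range = 2 ^ (n - 1) := by
    have hcount := AddSubgroup.card_eq_card_quotient_mul_card_addSubgroup ψ.ker
    rw [Nat.card_eq_fintype_card, hcard, hker] at hcount
    have h2n : 2 ^ n = 2 ^ (n - 1) * 2 := by
      rw [← pow_succ, Nat.sub_add_cancel hn]
    have hquot : Nat.card (F ⧸ ψ.ker) = 2 ^ (n - 1) := by omega
    rw [← Nat.card_congr (QuotientAddGroup.quotientKerEquivRange ψ).toEquiv, hquot]
  have hRset : Set.range (fun β : F => α * β ^ 2 - α ^ 2 * β) = ↑ψ.range := by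
    rw [AddMonoidHom.coe_range]
    rfl
  -- range ⊆ trace-zero set
  have hα3 : α ^ 3 ≠ 0 := pow_ne_zero _ hα
  have hRsub : Set.range (fun β : F => α * β ^ 2 - α ^ 2 * β) ⊆
      {x : F | fieldTr n ((α ^ 3)⁻¹ * x) = 0} := by
    rintro x ⟨β, rfl⟩
    have key : (α ^ 3)⁻¹ * (α * β ^ 2 - α ^ 2 * β) = (β / α) ^ 2 - β / α := by
      field_simp
    show fieldTr n ((α ^ 3)⁻¹ * (α * β ^ 2 - α ^ 2 * β)) = 0
    rw [key, CharTwo.sub_eq_add]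
    exact htr (β / α)
  -- cardinality of the trace-zero set
  have hHcard : ({x : F | fieldTr n ((α ^ 3)⁻¹ * x) = 0}).ncard ≤ 2 ^ (n - 1) := by
    have hHf : {x : F | fieldTr n ((α ^ 3)⁻¹ * x) = 0} =
        ↑(Finset.univ.filter (fun x => fieldTr n ((α ^ 3)⁻¹ * x) = 0)) := by
      ext x; simp
    rw [hHf, Set.ncard_coe_finset]
    have hle : (Finset.univ.filter (fun x => fieldTr n ((α ^ 3)⁻¹ * x) = 0)).card ≤
        T.card := by
      refine Finset.card_le_card_of_injOn (fun x => (α ^ 3)⁻¹ * x) ?_ ?_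
      · intro x hx
        rw [Finset.mem_coe, Finset.mem_filter] at hx ⊢
        exact ⟨Finset.mem_univ _, hx.2⟩
      · intro a _ b _ hab
        exact mul_left_cancel₀ (inv_ne_zero hα3) hab
    exact hle.trans hTcard
  have hmain : Set.range (fun β : F => α * β ^ 2 - α ^ 2 * β) =
      {x : F | fieldTr n ((α ^ 3)⁻¹ * x) = 0} := by
    refine Set.eq_of_subset_of_ncard_le hRsub ?_ (Set.toFinite _)
    have hRn : (Set.range (fun β : F => α * β ^ 2 - α ^ 2 * β)).ncard = 2 ^ (n - 1) := by
      rw [hRset, ← Nat.card_coe_set_eq, SetLike.coe_sort_coe, hrange]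
    rw [hRn]
    exact hHcard
  exact ⟨hmain, ψ.range, hRset.symm, hrange⟩
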